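/- Let G = (V, E) be a directed acyclic graph defining a linear influence instance with thresholds i.i.d. Uniform[0,1], let s ∈ V be a source (in-degree 0), and let x ∈ [0,1]^V satisfy x_v + w_{sv} ≤ 1 for every out-neighbor v of s. Let Ĝ = G − s (G with s and its incident edges removed), let x̂ be the restriction of x to V∖{s}, and let ŷ ∈ [0,1]^{V∖{s}} be defined by ŷ_v = w_{sv} if v is an out-neighbor of s and ŷ_v = 0 otherwise. Then σ_G(x) = (1 − x_s)·σ_{Ĝ}(x̂) + x_s·(1 + σ_{Ĝ}(x̂ + ŷ)), where σ_G and σ_{Ĝ} denote the expected final activated set sizes in G and Ĝ respectively. -/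

import Mathlib

open MeasureTheory Finset
open scoped Classical

/-- The final activated set of the linear influence process on a weighted digraph
with weights `wt`, thresholds `θ` and direct influences `x`: starting from `∅`, a
vertex `v` activates once the total weight of edges from the active set into `v`
plus `x v` reaches `θ v`; the process runs for `|W|` rounds. -/
noncomputable def finalSet {W : Type*} [Fintype W] (wt : W → W → ℝ) (θ x : W → ℝ) :
    Finset W :=
  (fun S => S ∪ Finset.univ.filter (fun v => θ v ≤ (∑ u ∈ S, wt u v) + x v))^[Fintype.card W] ∅

/-- The expected size of the final activated set of the linear influence process,
the thresholds being i.i.d. `Uniform [0,1]`. -/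
noncomputable def sigmaLin {W : Type*} [Fintype W] (wt : W → W → ℝ) (x : W → ℝ) : ℝ :=
  ∫ θ : W → ℝ, ((finalSet wt θ x).card : ℝ)
    ∂(Measure.pi fun _ : W => volume.restrict (Set.Icc 0 1))

section Step
variable {W : Type*} [Fintype W] (wt : W → W → ℝ) (θ x : W → ℝ)

noncomputable def stepF (S : Finset W) : Finset W :=
  S ∪ Finset.univ.filter (fun v => θ v ≤ (∑ u ∈ S, wt u v) + x v)

lemma finalSet_eq : finalSet wt θ x = (stepF wt θ x)^[Fintype.card W] ∅ := rfl

variable {wt θ x}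

lemma mem_stepF {S : Finset W} {v : W} :
    v ∈ stepF wt θ x S ↔ v ∈ S ∨ θ v ≤ (∑ u ∈ S, wt u v) + x v := by
  simp [stepF]

lemma subset_stepF (S : Finset W) : S ⊆ stepF wt θ x S := Finset.subset_union_left

lemma stepF_mono (hw0 : ∀ u v, 0 ≤ wt u v) {S T : Finset W} (h : S ⊆ T) :
    stepF wt θ x S ⊆ stepF wt θ x T := by
  intro v hv
  rcases mem_stepF.1 hv with hv | hv
  · exact subset_stepF T (h hv)
  · refine mem_stepF.2 (Or.inr (hv.trans ?_))
    have h2 := Finset.sum_le_sum_of_subset_of_nonneg h (fun u _ _ => hw0 u v)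
    linarith

lemma iterate_fixed_aux {f : Finset W → Finset W} (hf : ∀ S, S ⊆ f S) :
    f (f^[Fintype.card W] ∅) = f^[Fintype.card W] ∅ := by
  set n := Fintype.card W with hn
  -- either stabilizes before n, or cards grow
  have key : ∀ k : ℕ, (∃ j ≤ k, f (f^[j] ∅) = f^[j] ∅) ∨ k ≤ (f^[k] (∅ : Finset W)).card := by
    intro k
    induction k with
    | zero => exact Or.inr (Nat.zero_le _)
    | succ k ih =>
      rcases ih with ⟨j, hj, hfix⟩ | hcard
      · exact Or.inl ⟨j, hj.trans (Nat.le_succ k), hfix⟩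
      · by_cases hst : f (f^[k] ∅) = f^[k] (∅ : Finset W)
        · exact Or.inl ⟨k, Nat.le_succ k, hst⟩
        · right
          have hss : f^[k] (∅ : Finset W) ⊂ f^[k+1] ∅ := by
            rw [Function.iterate_succ_apply']
            exact (hf _).ssubset_of_ne (Ne.symm hst)
          have := Finset.card_lt_card hss
          omega
  have stab : ∀ j, f (f^[j] ∅) = f^[j] (∅ : Finset W) → ∀ m, j ≤ m → f^[m] (∅ : Finset W) = f^[j] ∅ := by
    intro j hfix m hm
    induction m with
    | zero => rw [Nat.le_zero.1 hm]
    | succ m ih =>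
      rcases Nat.eq_or_lt_of_le hm with h | h
      · rw [← h]
      · have h2 := ih (by omega)
        rw [Function.iterate_succ_apply', h2, hfix]
  rcases key n with ⟨j, hj, hfix⟩ | hcard
  · have h1 := stab j hfix n hj
    rw [h1, hfix]
  · have huniv : f^[n] (∅ : Finset W) = Finset.univ := by
      apply Finset.eq_univ_of_card
      have := Finset.card_le_univ (f^[n] (∅ : Finset W))
      omega
    rw [huniv]
    exact (Finset.univ_subset_iff.1 (huniv ▸ hf _))

lemma stepF_finalSet : stepF wt θ x (finalSet wt θ x) = finalSet wt θ x := by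
  rw [finalSet_eq]; exact iterate_fixed_aux subset_stepF

lemma finalSet_subset (hw0 : ∀ u v, 0 ≤ wt u v) {T : Finset W}
    (hT : stepF wt θ x T ⊆ T) : finalSet wt θ x ⊆ T := by
  rw [finalSet_eq]
  generalize Fintype.card W = n
  induction n with
  | zero => simp
  | succ n ih =>
    rw [Function.iterate_succ_apply']
    exact (stepF_mono hw0 ih).trans hT

end Step

section Cases
variable {V : Type*} [Fintype V] [DecidableEq V]
    {w : V → V → ℝ} (hw0 : ∀ u v, 0 ≤ w u v)
    {s : V} (hs : ∀ u, w u s = 0) {θ x : V → ℝ}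

def valEmb (s : V) : {a : V // a ≠ s} ↪ V := ⟨Subtype.val, Subtype.val_injective⟩

lemma sumMapVal (S : Finset {a : V // a ≠ s}) (v : V) :
    ∑ u ∈ S.map (valEmb s), w u v = ∑ u ∈ S, w u.val v := Finset.sum_map S (valEmb s) (w · v)

lemma s_not_mem_map (S : Finset {a : V // a ≠ s}) : s ∉ S.map (valEmb s) := by
  simp only [Finset.mem_map, valEmb, Function.Embedding.coeFn_mk]
  rintro ⟨u, -, hu⟩; exact u.2 hu

include hw0 hs in
lemma caseA (hθ : x s < θ s) :
    finalSet w θ x =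
      (finalSet (fun u v : {a : V // a ≠ s} => w u.val v.val) (fun v => θ v.val)
        (fun v => x v.val)).map (valEmb s) := by
  set wh : {a : V // a ≠ s} → {a : V // a ≠ s} → ℝ := fun u v => w u.val v.val
  set θh : {a : V // a ≠ s} → ℝ := fun v => θ v.val
  set xh : {a : V // a ≠ s} → ℝ := fun v => x v.val
  have hwh0 : ∀ u v, 0 ≤ wh u v := fun u v => hw0 _ _
  set Sh := finalSet wh θh xh with hSh
  apply Finset.Subset.antisymm
  · -- finalSet ⊆ map
    apply finalSet_subset hw0
    intro v hv
    rcases mem_stepF.1 hv with hv | hv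
    · exact hv
    · by_cases hvs : v = s
      · exfalso
        rw [hvs] at hv
        have : ∑ u ∈ Sh.map (valEmb s), w u s = 0 :=
          Finset.sum_eq_zero (fun u _ => hs u)
        rw [this] at hv; linarith
      · rw [sumMapVal] at hv
        have : (⟨v, hvs⟩ : {a : V // a ≠ s}) ∈ stepF wh θh xh Sh :=
          mem_stepF.2 (Or.inr hv)
        rw [stepF_finalSet] at this
        exact Finset.mem_map.2 ⟨⟨v, hvs⟩, this, rfl⟩
  · -- map ⊆ finalSet
    have hT : Sh ⊆ (finalSet w θ x).subtype (· ≠ s) := by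
      apply finalSet_subset hwh0
      intro v hv
      rcases mem_stepF.1 hv with hv | hv
      · exact hv
      · simp only [Finset.mem_subtype]
        have hsum : ∑ u ∈ (finalSet w θ x).subtype (· ≠ s), wh u v
            ≤ ∑ u ∈ finalSet w θ x, w u v.val := by
          rw [← sumMapVal ((finalSet w θ x).subtype (· ≠ s))]
          apply Finset.sum_le_sum_of_subset_of_nonneg _ (fun u _ _ => hw0 u v.val)
          intro u hu
          rcases Finset.mem_map.1 hu with ⟨u', hu', rfl⟩
          exact (Finset.mem_subtype.1 hu')
        have : v.val ∈ stepF w θ x (finalSet w θ x) := by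
          refine mem_stepF.2 (Or.inr ?_)
          calc θ v.val ≤ _ := hv
          _ ≤ _ := by dsimp only [xh]; linarith
        rwa [stepF_finalSet] at this
    intro v hv
    rcases Finset.mem_map.1 hv with ⟨u, hu, rfl⟩
    have := hT hu
    exact Finset.mem_subtype.1 this

include hw0 hs in
lemma caseB (hθ : θ s ≤ x s) :
    finalSet w θ x =
      insert s ((finalSet (fun u v : {a : V // a ≠ s} => w u.val v.val) (fun v => θ v.val)
        (fun v => x v.val + w s v.val)).map (valEmb s)) := by
  set wh : {a : V // a ≠ s} → {a : V // a ≠ s} → ℝ := fun u v => w u.val v.val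
  set θh : {a : V // a ≠ s} → ℝ := fun v => θ v.val
  set xh : {a : V // a ≠ s} → ℝ := fun v => x v.val + w s v.val
  have hwh0 : ∀ u v, 0 ≤ wh u v := fun u v => hw0 _ _
  set Sh := finalSet wh θh xh with hSh
  have hsfin : s ∈ finalSet w θ x := by
    rw [← stepF_finalSet (wt := w) (θ := θ) (x := x)]
    refine mem_stepF.2 (Or.inr ?_)
    have : ∑ u ∈ finalSet w θ x, w u s = 0 := Finset.sum_eq_zero (fun u _ => hs u)
    rw [this]; linarith
  apply Finset.Subset.antisymm
  · -- ⊆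
    apply finalSet_subset hw0
    intro v hv
    rcases mem_stepF.1 hv with hv | hv
    · exact hv
    · by_cases hvs : v = s
      · subst hvs; exact Finset.mem_insert_self _ _
      · have hsum : ∑ u ∈ insert s (Sh.map (valEmb s)), w u v
            = ∑ u ∈ Sh, wh u ⟨v, hvs⟩ + w s v := by
          rw [Finset.sum_insert (s_not_mem_map Sh), sumMapVal]
          ring
        rw [hsum] at hv
        have : (⟨v, hvs⟩ : {a : V // a ≠ s}) ∈ stepF wh θh xh Sh := by
          refine mem_stepF.2 (Or.inr ?_)
          dsimp only [θh, xh]; linarith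
        rw [stepF_finalSet] at this
        exact Finset.mem_insert_of_mem (Finset.mem_map.2 ⟨⟨v, hvs⟩, this, rfl⟩)
  · -- ⊇
    intro v hv
    rcases Finset.mem_insert.1 hv with rfl | hv
    · exact hsfin
    · rcases Finset.mem_map.1 hv with ⟨u, hu, rfl⟩
      have hT : Sh ⊆ (finalSet w θ x).subtype (· ≠ s) := by
        apply finalSet_subset hwh0
        intro v hv
        rcases mem_stepF.1 hv with hv | hv
        · exact hv
        · simp only [Finset.mem_subtype]
          have hsub : insert s (((finalSet w θ x).subtype (· ≠ s)).map (valEmb s))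
              ⊆ finalSet w θ x := by
            intro u hu
            rcases Finset.mem_insert.1 hu with rfl | hu
            · exact hsfin
            · rcases Finset.mem_map.1 hu with ⟨u', hu', rfl⟩
              exact Finset.mem_subtype.1 hu'
          have hsum : ∑ u ∈ (finalSet w θ x).subtype (· ≠ s), wh u v + w s v.val
              ≤ ∑ u ∈ finalSet w θ x, w u v.val := by
            rw [← sumMapVal ((finalSet w θ x).subtype (· ≠ s))]
            have h3 := Finset.sum_insert (f := (w · v.val)) (s_not_mem_map (s := s)
              ((finalSet w θ x).subtype (· ≠ s)))
            have h4 := Finset.sum_le_sum_of_subset_of_nonneg hsub (fun u _ _ => hw0 u v.val)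
            rw [h3] at h4
            linarith
          have : v.val ∈ stepF w θ x (finalSet w θ x) := by
            refine mem_stepF.2 (Or.inr ?_)
            have := hv
            dsimp only [θh, xh] at this
            linarith
          rwa [stepF_finalSet] at this
      exact Finset.mem_subtype.1 (hT hu)

end Cases

section Meas
variable {W : Type*} [Fintype W] (wt : W → W → ℝ) (x : W → ℝ)

lemma measurableSet_iterate (k : ℕ) (S : Finset W) :
    MeasurableSet {θ : W → ℝ | (stepF wt θ x)^[k] ∅ = S} := by
  induction k generalizing S with
  | zero =>
    by_cases h : (∅ : Finset W) = S
    · have : {θ : W → ℝ | (stepF wt θ x)^[0] ∅ = S} = Set.univ := by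
        ext θ; simp [h]
      rw [this]; exact MeasurableSet.univ
    · have : {θ : W → ℝ | (stepF wt θ x)^[0] ∅ = S} = ∅ := by
        ext θ; simp [h]
      rw [this]; exact MeasurableSet.empty
  | succ k ih =>
    have hrw : {θ : W → ℝ | (stepF wt θ x)^[k+1] ∅ = S} =
        ⋃ T : Finset W, ({θ | (stepF wt θ x)^[k] ∅ = T} ∩ {θ | stepF wt θ x T = S}) := by
      ext θ
      simp only [Set.mem_setOf_eq, Set.mem_iUnion, Set.mem_inter_iff,
        Function.iterate_succ_apply']
      constructor
      · intro h; exact ⟨(stepF wt θ x)^[k] ∅, rfl, h⟩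
      · rintro ⟨T, rfl, h⟩; exact h
    rw [hrw]
    refine MeasurableSet.iUnion fun T => (ih T).inter ?_
    have hrw2 : {θ : W → ℝ | stepF wt θ x T = S} =
        ⋂ v : W, {θ | (v ∈ T ∨ θ v ≤ (∑ u ∈ T, wt u v) + x v) ↔ v ∈ S} := by
      ext θ
      simp only [Set.mem_setOf_eq, Set.mem_iInter, Finset.ext_iff, mem_stepF]
    rw [hrw2]
    refine MeasurableSet.iInter fun v => ?_
    by_cases hT : v ∈ T <;> by_cases hS : v ∈ S
    · simp only [hT, hS, true_or, true_iff]; exact MeasurableSet.univ.congr (by ext θ; simp)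
    · simp only [hT, hS, true_or]
      have : {θ : W → ℝ | True ↔ False} = ∅ := by ext θ; simp
      simp only [iff_false, not_true]
      exact MeasurableSet.empty.congr (by ext θ; simp)
    · have : {θ : W → ℝ | (v ∈ T ∨ θ v ≤ (∑ u ∈ T, wt u v) + x v) ↔ v ∈ S}
          = {θ : W → ℝ | θ v ≤ (∑ u ∈ T, wt u v) + x v} := by
        ext θ; simp [hT, hS]
      rw [this]
      exact measurableSet_le (measurable_pi_apply v) measurable_const
    · have : {θ : W → ℝ | (v ∈ T ∨ θ v ≤ (∑ u ∈ T, wt u v) + x v) ↔ v ∈ S}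
          = {θ : W → ℝ | θ v ≤ (∑ u ∈ T, wt u v) + x v}ᶜ := by
        ext θ; simp [hT, hS]
      rw [this]
      exact (measurableSet_le (measurable_pi_apply v) measurable_const).compl

lemma measurableSet_finalSet_eq (S : Finset W) :
    MeasurableSet {θ : W → ℝ | finalSet wt θ x = S} :=
  measurableSet_iterate wt x (Fintype.card W) S

lemma measurable_card_finalSet :
    Measurable (fun θ : W → ℝ => ((finalSet wt θ x).card : ℝ)) := by
  have h : (fun θ : W → ℝ => ((finalSet wt θ x).card : ℝ))
      = fun θ => ∑ S : Finset W, if finalSet wt θ x = S then (S.card : ℝ) else 0 := by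
    ext θ
    rw [Finset.sum_ite_eq Finset.univ (finalSet wt θ x) (fun S => ((S.card : ℝ)))]
    simp
  rw [h]
  refine Finset.measurable_sum _ (fun S _ => ?_)
  exact Measurable.ite (measurableSet_finalSet_eq wt x S) measurable_const measurable_const

instance : IsProbabilityMeasure (volume.restrict (Set.Icc (0:ℝ) 1)) :=
  ⟨by simp [Real.volume_Icc]⟩

lemma integrable_card_finalSet :
    Integrable (fun θ : W → ℝ => ((finalSet wt θ x).card : ℝ))
      (Measure.pi fun _ : W => volume.restrict (Set.Icc 0 1)) := by
  refine (integrable_const ((Fintype.card W : ℝ))).mono'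
    ((measurable_card_finalSet wt x).aestronglyMeasurable) ?_
  refine ae_of_all _ (fun θ => ?_)
  rw [Real.norm_natCast]
  exact_mod_cast Finset.card_le_univ _

end Meas

lemma piCongrInst {ι : Type*} {α : ι → Type*} (i1 i2 : Fintype ι) [∀ i, MeasurableSpace (α i)]
    (μ : ∀ i, Measure (α i)) : @Measure.pi ι α i1 _ μ = @Measure.pi ι α i2 _ μ := by
  cases Subsingleton.elim i1 i2; rfl


/-- Removing a source `s` from a DAG: if `x v + w s v ≤ 1` for every out-neighbor
`v` of `s`, then `σ_G(x) = (1 - x_s) σ_Ĝ(x̂) + x_s (1 + σ_Ĝ(x̂ + ŷ))`, where `Ĝ = G - s`,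
`x̂` is the restriction of `x`, and `ŷ_v = w s v`. -/
theorem stmt11 {V : Type*} [Fintype V] [DecidableEq V]
    (w : V → V → ℝ) (hw0 : ∀ u v, 0 ≤ w u v) (hw1 : ∀ v, (∑ u, w u v) ≤ 1)
    (r : V → ℕ) (hdag : ∀ u v, w u v ≠ 0 → r u < r v)
    (s : V) (hs : ∀ u, w u s = 0)
    (x : V → ℝ) (hx : ∀ v, x v ∈ Set.Icc (0 : ℝ) 1)
    (hcap : ∀ v, v ≠ s → x v + w s v ≤ 1) :
    sigmaLin w x =
      (1 - x s) * sigmaLin (fun u v : {a : V // a ≠ s} => w u.val v.val)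
          (fun v => x v.val)
        + x s * (1 + sigmaLin (fun u v : {a : V // a ≠ s} => w u.val v.val)
          (fun v => x v.val + w s v.val)) := by
  classical
  set wh : {a : V // a ≠ s} → {a : V // a ≠ s} → ℝ := fun u v => w u.val v.val with hwh
  set xh1 : {a : V // a ≠ s} → ℝ := fun v => x v.val with hxh1
  set xh2 : {a : V // a ≠ s} → ℝ := fun v => x v.val + w s v.val with hxh2
  set e := MeasurableEquiv.piEquivPiSubtypeProd (fun _ : V => ℝ) (fun v => v = s) with he
  set μ1 : Measure ({v : V // v = s} → ℝ) :=
    Measure.pi (fun _ => volume.restrict (Set.Icc (0:ℝ) 1)) with hμ1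
  set μ2 : Measure ({v : V // ¬ v = s} → ℝ) :=
    Measure.pi (fun _ => volume.restrict (Set.Icc (0:ℝ) 1)) with hμ2
  have hmp : MeasurePreserving e (Measure.pi fun _ : V => volume.restrict (Set.Icc (0:ℝ) 1))
      (μ1.prod μ2) := by
    have hmp0 := measurePreserving_piEquivPiSubtypeProd
      (fun _ : V => volume.restrict (Set.Icc (0:ℝ) 1)) (fun v => v = s)
    rw [hμ1, hμ2, he]
    convert hmp0 using 2 <;> exact piCongrInst _ _ _
  have h1 : sigmaLin w x = ∫ z, ((finalSet w (e.symm z) x).card : ℝ) ∂(μ1.prod μ2) := by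
    unfold sigmaLin
    exact ((hmp.symm e).integral_comp e.symm.measurableEmbedding
      (fun θ => ((finalSet w θ x).card : ℝ))).symm
  have hint : Integrable (fun z => ((finalSet w (e.symm z) x).card : ℝ)) (μ1.prod μ2) :=
    ((hmp.symm e).integrable_comp_emb e.symm.measurableEmbedding
      (g := fun θ => ((finalSet w θ x).card : ℝ))).2 (integrable_card_finalSet w x)
  have hes : ∀ (a : {v : V // v = s} → ℝ) (b : {v : V // ¬ v = s} → ℝ) (v : V),
      e.symm (a, b) v = if h : v = s then a ⟨v, h⟩ else b ⟨v, h⟩ := fun a b v => rfl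
  have key : ∀ (a : {v : V // v = s} → ℝ) (b : {v : V // ¬ v = s} → ℝ),
      ((finalSet w (e.symm (a, b)) x).card : ℝ)
      = if a ⟨s, rfl⟩ ≤ x s then 1 + ((finalSet wh b xh2).card : ℝ)
        else ((finalSet wh b xh1).card : ℝ) := by
    intro a b
    have hθs : e.symm (a, b) s = a ⟨s, rfl⟩ := by rw [hes]; simp
    have hθb : (fun v : {a : V // a ≠ s} => e.symm (a, b) v.val) = b := by
      funext v; rw [hes]; exact dif_neg v.2
    by_cases h : a ⟨s, rfl⟩ ≤ x s
    · rw [if_pos h, caseB hw0 hs (by rw [hθs]; exact h),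
        Finset.card_insert_of_notMem (s_not_mem_map _), Finset.card_map, hθb]
      push_cast; ring
    · rw [if_neg h, caseA hw0 hs (by rw [hθs]; exact lt_of_not_ge h), Finset.card_map, hθb]
  have hinner : ∀ a : {v : V // v = s} → ℝ,
      (∫ b, ((finalSet w (e.symm (a, b)) x).card : ℝ) ∂μ2)
      = if a ⟨s, rfl⟩ ≤ x s then 1 + sigmaLin wh xh2 else sigmaLin wh xh1 := by
    intro a
    by_cases h : a ⟨s, rfl⟩ ≤ x s
    · rw [if_pos h]
      have hrw : (fun b : {v : V // ¬ v = s} → ℝ =>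
            ((finalSet w (e.symm (a, b)) x).card : ℝ))
          = fun b => 1 + ((finalSet wh b xh2).card : ℝ) := by
        funext b; rw [key a b, if_pos h]
      rw [hrw, integral_add (integrable_const 1) (integrable_card_finalSet wh xh2)]
      unfold sigmaLin
      simp
    · rw [if_neg h]
      have hrw : (fun b : {v : V // ¬ v = s} → ℝ =>
            ((finalSet w (e.symm (a, b)) x).card : ℝ))
          = fun b => ((finalSet wh b xh1).card : ℝ) := by
        funext b; rw [key a b, if_neg h]
      rw [hrw]
      rfl
  set A := 1 + sigmaLin wh xh2 with hA
  set B := sigmaLin wh xh1 with hB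
  have houter : (∫ a, (if a ⟨s, rfl⟩ ≤ x s then A else B) ∂μ1)
      = ∫ t, (if t ≤ x s then A else B) ∂(volume.restrict (Set.Icc (0:ℝ) 1)) := by
    have hu : MeasurePreserving (MeasurableEquiv.funUnique {v : V // v = s} ℝ) μ1
        (volume.restrict (Set.Icc (0:ℝ) 1)) := by
      have := measurePreserving_funUnique (volume.restrict (Set.Icc (0:ℝ) 1)) {v : V // v = s}
      convert this using 1
      rw [hμ1]; exact piCongrInst _ _ _
    have h2 := hu.integral_comp' (f := MeasurableEquiv.funUnique {v : V // v = s} ℝ)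
      (fun t => if t ≤ x s then A else B)
    have hfu : ∀ a : {v : V // v = s} → ℝ,
        (MeasurableEquiv.funUnique {v : V // v = s} ℝ) a = a ⟨s, rfl⟩ := fun a => rfl
    simp only [hfu] at h2
    exact h2
  have h01 := hx s
  have hscalar : (∫ t, (if t ≤ x s then A else B) ∂(volume.restrict (Set.Icc (0:ℝ) 1)))
      = x s * A + (1 - x s) * B := by
    have hif : (fun t : ℝ => if t ≤ x s then A else B)
        = fun t => (Set.Iic (x s)).indicator (fun _ => A - B) t + B := by
      funext t
      by_cases h : t ≤ x s <;> simp [Set.indicator, Set.mem_Iic, h] <;> ring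
    rw [hif, integral_add ((integrable_const (A - B)).indicator measurableSet_Iic)
      (integrable_const B), integral_indicator_const _ measurableSet_Iic, integral_const]
    have hνIic : (volume.restrict (Set.Icc (0:ℝ) 1)) (Set.Iic (x s))
        = ENNReal.ofReal (x s) := by
      rw [Measure.restrict_apply measurableSet_Iic]
      have hins : Set.Iic (x s) ∩ Set.Icc 0 1 = Set.Icc 0 (x s) := by
        ext t
        simp only [Set.mem_inter_iff, Set.mem_Iic, Set.mem_Icc]
        constructor
        · rintro ⟨h1, h2, h3⟩; exact ⟨h2, h1⟩
        · rintro ⟨h1, h2⟩; exact ⟨h2, h1, h2.trans h01.2⟩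
      rw [hins, Real.volume_Icc]
      simp
    rw [measureReal_def, measureReal_def, hνIic]
    have hν1 : (volume.restrict (Set.Icc (0:ℝ) 1)) Set.univ = 1 := measure_univ
    rw [hν1]
    simp [ENNReal.toReal_ofReal h01.1]
    ring
  have hmain : sigmaLin w x = x s * A + (1 - x s) * B := by
    rw [h1, integral_prod _ hint]
    rw [integral_congr_ae (ae_of_all _ hinner)]
    rw [houter, hscalar]
  rw [hmain, hA, hB]
  ring
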